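/- Consider the flow on ℝ² (in coordinates (φ, φ̇)) defined by the controlled inverted pendulum equation φ̈ = u(φ, φ̇)·sin φ − cos φ + v(φ, φ̇) with u, v : ℝ² → ℝ smooth, |v(0,0)| < 1 and |v(π,0)| < 1, and let W = {(φ, φ̇, t) : 0 < φ < π} in the extended phase space ℝ² × ℝ. Then the set of egress points equals the set of strict egress points and both equal {(φ, φ̇, t) : φ = 0, φ̇ < 0 or φ = π, φ̇ > 0}. In particular, points with φ = 0, φ̇ = 0 (and with φ = π, φ̇ = 0) are not egress points. -/

import Mathlib

open Set Filter Topology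

/-- If `x` has negative derivative at `0`, then `x t > x 0` just before `0`
and `x t < x 0` just after `0`. -/
lemma slope_neg_lemma (x : ℝ → ℝ) (b : ℝ) (hx : HasDerivAt x b 0) (hb : b < 0) :
    ∃ ε > (0:ℝ), (∀ t ∈ Set.Ioo (-ε) (0:ℝ), x 0 < x t) ∧ (∀ t ∈ Set.Ioo (0:ℝ) ε, x t < x 0) := by
  have h := hasDerivAt_iff_tendsto_slope.mp hx
  have h2 : {t : ℝ | slope x 0 t < 0} ∈ 𝓝[≠] (0:ℝ) :=
    h.eventually (isOpen_Iio.eventually_mem hb)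
  rw [Metric.mem_nhdsWithin_iff] at h2
  obtain ⟨ε, hε, hsub⟩ := h2
  refine ⟨ε, hε, ?_, ?_⟩
  · intro t ht
    have ht0 : t ≠ 0 := ne_of_lt ht.2
    have : slope x 0 t < 0 := hsub ⟨by
      simp [Real.dist_eq, abs_lt]; constructor <;> [linarith [ht.1]; linarith [ht.2]], ht0⟩
    rw [slope_def_field] at this
    have := div_neg_iff.mp (by simpa using this)
    rcases this with ⟨h1, h2⟩ | ⟨h1, h2⟩
    · linarith [ht.2]
    · linarith [ht.1, ht.2]
  · intro t ht
    have ht0 : t ≠ 0 := ne_of_gt ht.1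
    have : slope x 0 t < 0 := hsub ⟨by
      simp [Real.dist_eq, abs_lt]; constructor <;> [linarith [ht.1]; linarith [ht.2]], ht0⟩
    rw [slope_def_field] at this
    have := div_neg_iff.mp (by simpa using this)
    rcases this with ⟨h1, h2⟩ | ⟨h1, h2⟩
    · linarith [ht.1, ht.2]
    · linarith [ht.1]

/-- If `x` has positive derivative at `0`, then `x t < x 0` just before `0`
and `x t > x 0` just after `0`. -/
lemma slope_pos_lemma (x : ℝ → ℝ) (b : ℝ) (hx : HasDerivAt x b 0) (hb : 0 < b) :
    ∃ ε > (0:ℝ), (∀ t ∈ Set.Ioo (-ε) (0:ℝ), x t < x 0) ∧ (∀ t ∈ Set.Ioo (0:ℝ) ε, x 0 < x t) := by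
  obtain ⟨ε, hε, h1, h2⟩ := slope_neg_lemma (fun t => -x t) (-b) hx.neg (by linarith)
  refine ⟨ε, hε, fun t ht => ?_, fun t ht => ?_⟩
  · have := h1 t ht; linarith
  · have := h2 t ht; linarith

/-- Second order test: if `x' 0 = 0` and `x'' 0 < 0` (with continuous second
derivative) then `x` has a strict local maximum at `0`. -/
lemma second_neg_lemma (x y g : ℝ → ℝ) (hx : ∀ t, HasDerivAt x (y t) t)
    (hy : ∀ t, HasDerivAt y (g t) t) (hg : Continuous g)
    (hy0 : y 0 = 0) (hg0 : g 0 < 0) :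
    ∃ ε > (0:ℝ), ∀ t ∈ Set.Ioo (-ε) (0:ℝ) ∪ Set.Ioo (0:ℝ) ε, x t < x 0 := by
  obtain ⟨ε, hε, hball⟩ : ∃ ε > (0:ℝ), ∀ t : ℝ, |t| < ε → g t < 0 := by
    have h2 : {t : ℝ | g t < 0} ∈ 𝓝 (0:ℝ) :=
      (hg.continuousAt (x := 0)).eventually (isOpen_Iio.eventually_mem hg0)
    rw [Metric.mem_nhds_iff] at h2
    obtain ⟨ε, hε, hsub⟩ := h2
    exact ⟨ε, hε, fun t ht => hsub (by simpa [Real.dist_eq] using ht)⟩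
  have hyc : Continuous y := continuous_iff_continuousAt.mpr fun t => (hy t).continuousAt
  have hxc : Continuous x := continuous_iff_continuousAt.mpr fun t => (hx t).continuousAt
  have hanti : StrictAntiOn y (Set.Ioo (-ε) ε) := by
    apply strictAntiOn_of_deriv_neg (convex_Ioo _ _) hyc.continuousOn
    intro t ht
    rw [interior_Ioo] at ht
    rw [(hy t).deriv]
    exact hball t (abs_lt.mpr ⟨ht.1, ht.2⟩)
  have h0mem : (0:ℝ) ∈ Set.Ioo (-ε) ε := by constructor <;> linarith
  have hypos : ∀ t ∈ Set.Ioo (-ε) (0:ℝ), 0 < y t := by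
    intro t ht
    have := hanti ⟨ht.1, lt_trans ht.2 hε⟩ h0mem ht.2
    rwa [hy0] at this
  have hyneg : ∀ t ∈ Set.Ioo (0:ℝ) ε, y t < 0 := by
    intro t ht
    have := hanti h0mem ⟨by linarith [ht.1], ht.2⟩ ht.1
    rwa [hy0] at this
  have hmono : StrictMonoOn x (Set.Icc (-ε) 0) := by
    apply strictMonoOn_of_deriv_pos (convex_Icc _ _) hxc.continuousOn
    intro t ht
    rw [interior_Icc] at ht
    rw [(hx t).deriv]
    exact hypos t ht
  have hanti2 : StrictAntiOn x (Set.Icc 0 ε) := by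
    apply strictAntiOn_of_deriv_neg (convex_Icc _ _) hxc.continuousOn
    intro t ht
    rw [interior_Icc] at ht
    rw [(hx t).deriv]
    exact hyneg t ht
  refine ⟨ε, hε, ?_⟩
  rintro t (ht | ht)
  · exact hmono ⟨ht.1.le, ht.2.le⟩ ⟨by linarith, le_refl 0⟩ ht.2
  · exact hanti2 ⟨le_refl 0, by linarith [ht.2]⟩ ⟨ht.1.le, ht.2.le⟩ ht.1

/-- Second order test: if `x' 0 = 0` and `x'' 0 > 0` (with continuous second
derivative) then `x` has a strict local minimum at `0`. -/
lemma second_pos_lemma (x y g : ℝ → ℝ) (hx : ∀ t, HasDerivAt x (y t) t)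
    (hy : ∀ t, HasDerivAt y (g t) t) (hg : Continuous g)
    (hy0 : y 0 = 0) (hg0 : 0 < g 0) :
    ∃ ε > (0:ℝ), ∀ t ∈ Set.Ioo (-ε) (0:ℝ) ∪ Set.Ioo (0:ℝ) ε, x 0 < x t := by
  obtain ⟨ε, hε, h⟩ := second_neg_lemma (fun t => -x t) (fun t => -y t) (fun t => -g t)
    (fun t => (hx t).neg) (fun t => (hy t).neg) hg.neg (by simp [hy0]) (by simpa using hg0)
  exact ⟨ε, hε, fun t ht => by have := h t ht; linarith⟩

/-- Small-interval continuity bound. -/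
lemma cont_lt_lemma (x : ℝ → ℝ) (hx : Continuous x) (c : ℝ) (h : x 0 < c) :
    ∃ ε > (0:ℝ), ∀ t : ℝ, |t| < ε → x t < c := by
  have h2 : {t : ℝ | x t < c} ∈ 𝓝 (0:ℝ) :=
    (hx.continuousAt (x := 0)).eventually (isOpen_Iio.eventually_mem h)
  rw [Metric.mem_nhds_iff] at h2
  obtain ⟨ε, hε, hsub⟩ := h2
  exact ⟨ε, hε, fun t ht => hsub (by simpa [Real.dist_eq] using ht)⟩

lemma cont_gt_lemma (x : ℝ → ℝ) (hx : Continuous x) (c : ℝ) (h : c < x 0) :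
    ∃ ε > (0:ℝ), ∀ t : ℝ, |t| < ε → c < x t := by
  obtain ⟨ε, hε, hb⟩ := cont_lt_lemma (fun t => -x t) hx.neg (-c) (by simpa using h)
  exact ⟨ε, hε, fun t ht => by have := hb t ht; linarith⟩

/-- A point in the intersection of two left punctured neighborhoods. -/
lemma pick_lemma (ε ε' : ℝ) (h : 0 < ε) (h' : 0 < ε') :
    ∃ t : ℝ, t ∈ Set.Ioo (-ε) (0:ℝ) ∧ t ∈ Set.Ioo (-ε') (0:ℝ) := by
  refine ⟨-(min ε ε') / 2, ⟨?_, ?_⟩, ⟨?_, ?_⟩⟩ <;>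
    [skip; skip; skip; skip] <;>
    [ (have := min_le_left ε ε'; have := lt_min h h'; linarith);
      (have := lt_min h h'; linarith);
      (have := min_le_right ε ε'; have := lt_min h h'; linarith);
      (have := lt_min h h'; linarith) ]

/-- The set of egress points of an open set `W` with respect to the flow `φ`. -/
def flowEgress {M : Type*} [TopologicalSpace M] (φ : M → ℝ → M) (W : Set M) : Set M :=
  {x ∈ frontier W | ∃ ε > (0 : ℝ), ∀ t ∈ Set.Ioo (-ε) (0 : ℝ), φ x t ∈ W}

/-- The set of strict egress points of `W` with respect to the flow `φ`. -/
def flowStrictEgress {M : Type*} [TopologicalSpace M] (φ : M → ℝ → M) (W : Set M) : Set M :=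
  {x ∈ flowEgress φ W | ∃ ε > (0 : ℝ), ∀ t ∈ Set.Ioo (0 : ℝ) ε, φ x t ∉ W ∪ frontier W}

/-- For the flow of the controlled inverted pendulum
`φ̈ = u(φ, φ̇)·sin φ - cos φ + v(φ, φ̇)` (with smooth `u, v`, `|v(0,0)| < 1`,
`|v(π,0)| < 1`), extended to the extended phase space `ℝ² × ℝ`, and the set
`W = {(φ, φ̇, t) : 0 < φ < π}`, the egress points coincide with the strict egress
points and both equal `{(φ, φ̇, t) : (φ = 0 ∧ φ̇ < 0) ∨ (φ = π ∧ φ̇ > 0)}`;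
in particular the points with `φ = 0, φ̇ = 0` and `φ = π, φ̇ = 0` are not egress
points. -/
theorem inverted_pendulum_egress_eq_strictEgress
    (u v : ℝ × ℝ → ℝ)
    (hu : ContDiff ℝ (⊤ : ℕ∞) u) (hv : ContDiff ℝ (⊤ : ℕ∞) v)
    (F : ℝ × ℝ → ℝ → ℝ × ℝ)
    (hFcont : Continuous fun q : (ℝ × ℝ) × ℝ => F q.1 q.2)
    (hF0 : ∀ p, F p 0 = p)
    (hFadd : ∀ p t s, F p (t + s) = F (F p t) s)
    (hode1 : ∀ p t, HasDerivAt (fun s => (F p s).1) ((F p t).2) t)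
    (hode2 : ∀ p t, HasDerivAt (fun s => (F p s).2)
      (u (F p t) * Real.sin (F p t).1 - Real.cos (F p t).1 + v (F p t)) t)
    (hv0 : |v (0, 0)| < 1) (hvπ : |v (Real.pi, 0)| < 1)
    -- the flow on the extended phase space `ℝ² × ℝ`
    (Fe : (ℝ × ℝ) × ℝ → ℝ → (ℝ × ℝ) × ℝ)
    (hFe : Fe = fun q t => (F q.1 t, q.2 + t))
    (W : Set ((ℝ × ℝ) × ℝ))
    (hW : W = {q : (ℝ × ℝ) × ℝ | 0 < q.1.1 ∧ q.1.1 < Real.pi}) :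
    flowEgress Fe W = flowStrictEgress Fe W ∧
    flowEgress Fe W = {q : (ℝ × ℝ) × ℝ |
      (q.1.1 = 0 ∧ q.1.2 < 0) ∨ (q.1.1 = Real.pi ∧ 0 < q.1.2)} ∧
    (∀ t : ℝ, (((0 : ℝ), (0 : ℝ)), t) ∉ flowEgress Fe W ∧
      ((Real.pi, (0 : ℝ)), t) ∉ flowEgress Fe W) := by
  subst hFe hW
  set S : Set ((ℝ × ℝ) × ℝ) := {q : (ℝ × ℝ) × ℝ |
      (q.1.1 = 0 ∧ q.1.2 < 0) ∨ (q.1.1 = Real.pi ∧ 0 < q.1.2)} with hS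
  -- frontier computation
  have hWeq : {q : (ℝ × ℝ) × ℝ | 0 < q.1.1 ∧ q.1.1 < Real.pi}
      = (Set.Ioo (0:ℝ) Real.pi ×ˢ (Set.univ : Set ℝ)) ×ˢ (Set.univ : Set ℝ) := by
    ext q; simp [Set.mem_prod]
  have hfr : frontier {q : (ℝ × ℝ) × ℝ | 0 < q.1.1 ∧ q.1.1 < Real.pi}
      = {q : (ℝ × ℝ) × ℝ | q.1.1 = 0 ∨ q.1.1 = Real.pi} := by
    rw [hWeq, frontier_prod_univ_eq, frontier_prod_univ_eq, frontier_Ioo Real.pi_pos]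
    ext q; simp
  -- basic continuity facts
  have hFp : ∀ p : ℝ × ℝ, Continuous fun t => F p t :=
    fun p => hFcont.comp (continuous_const.prodMk continuous_id)
  have hxc : ∀ p : ℝ × ℝ, Continuous fun t => (F p t).1 :=
    fun p => continuous_fst.comp (hFp p)
  have hgc : ∀ p : ℝ × ℝ, Continuous fun t =>
      u (F p t) * Real.sin (F p t).1 - Real.cos (F p t).1 + v (F p t) := by
    intro p
    exact (((hu.continuous.comp (hFp p)).mul (Real.continuous_sin.comp (hxc p))).sub
      (Real.continuous_cos.comp (hxc p))).add (hv.continuous.comp (hFp p))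
  have hd1 : ∀ p : ℝ × ℝ, HasDerivAt (fun s => (F p s).1) p.2 0 := by
    intro p; have := hode1 p 0; rwa [hF0] at this
  have hd2 : ∀ p : ℝ × ℝ, ∀ t, HasDerivAt (fun s => (F p s).2)
      (u (F p t) * Real.sin (F p t).1 - Real.cos (F p t).1 + v (F p t)) t := hode2
  have hx0 : ∀ p : ℝ × ℝ, (F p 0).1 = p.1 := fun p => by rw [hF0]
  have hy0 : ∀ p : ℝ × ℝ, (F p 0).2 = p.2 := fun p => by rw [hF0]
  have hv0' : v (0, 0) < 1 := (abs_lt.mp hv0).2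
  have hvπ' : -1 < v (Real.pi, 0) := (abs_lt.mp hvπ).1
  -- Inclusion 1 : every egress point lies in S
  have hSub1 : flowEgress (fun q t => (F q.1 t, q.2 + t))
      {q : (ℝ × ℝ) × ℝ | 0 < q.1.1 ∧ q.1.1 < Real.pi} ⊆ S := by
    rintro ⟨p, τ⟩ ⟨hfrm, ε, hε, hmem⟩
    rw [hfr] at hfrm
    simp only [Set.mem_setOf_eq] at hfrm hmem ⊢
    rcases hfrm with ha | ha
    · -- p.1 = 0 : show p.2 < 0
      left
      refine ⟨ha, ?_⟩
      by_contra hb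
      push_neg at hb
      rcases eq_or_lt_of_le hb with hb0 | hbpos
      · -- p.2 = 0 : second order local max
        obtain ⟨ε₂, hε₂, hloc⟩ := second_neg_lemma (fun s => (F p s).1) (fun s => (F p s).2)
          (fun t => u (F p t) * Real.sin (F p t).1 - Real.cos (F p t).1 + v (F p t))
          (fun t => hode1 p t) (hd2 p) (hgc p)
          (by show (F p 0).2 = 0; rw [hy0 p, ← hb0]) (by
            show u (F p 0) * Real.sin (F p 0).1 - Real.cos (F p 0).1 + v (F p 0) < 0
            rw [hF0, ha, Real.sin_zero, Real.cos_zero, mul_zero]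
            have hp : p = (0, 0) := Prod.ext ha hb0.symm
            rw [hp]
            linarith)
        obtain ⟨t, ht1, ht2⟩ := pick_lemma ε ε₂ hε hε₂
        have h1 := (hmem t ht1).1
        have h2 := hloc t (Or.inl ht2)
        rw [hx0 p, ha] at h2
        linarith
      · -- p.2 > 0 : slope argument
        obtain ⟨ε₁, hε₁, hloc, _⟩ := slope_pos_lemma (fun s => (F p s).1) p.2 (hd1 p) hbpos
        obtain ⟨t, ht1, ht2⟩ := pick_lemma ε ε₁ hε hε₁
        have h1 := (hmem t ht1).1
        have h2 := hloc t ht2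
        rw [hx0 p, ha] at h2
        linarith
    · -- p.1 = π : show 0 < p.2
      right
      refine ⟨ha, ?_⟩
      by_contra hb
      push_neg at hb
      rcases eq_or_lt_of_le hb with hb0 | hbneg
      · -- p.2 = 0 : second order local min
        obtain ⟨ε₂, hε₂, hloc⟩ := second_pos_lemma (fun s => (F p s).1) (fun s => (F p s).2)
          (fun t => u (F p t) * Real.sin (F p t).1 - Real.cos (F p t).1 + v (F p t))
          (fun t => hode1 p t) (hd2 p) (hgc p)
          (by show (F p 0).2 = 0; rw [hy0 p, hb0]) (by
            show 0 < u (F p 0) * Real.sin (F p 0).1 - Real.cos (F p 0).1 + v (F p 0)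
            rw [hF0, ha, Real.sin_pi, Real.cos_pi, mul_zero]
            have hp : p = (Real.pi, 0) := Prod.ext ha hb0
            rw [hp]
            linarith)
        obtain ⟨t, ht1, ht2⟩ := pick_lemma ε ε₂ hε hε₂
        have h1 := (hmem t ht1).2
        have h2 := hloc t (Or.inl ht2)
        rw [hx0 p, ha] at h2
        linarith
      · -- p.2 < 0 : slope argument
        obtain ⟨ε₁, hε₁, hloc, _⟩ := slope_neg_lemma (fun s => (F p s).1) p.2 (hd1 p) hbneg
        obtain ⟨t, ht1, ht2⟩ := pick_lemma ε ε₁ hε hε₁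
        have h1 := (hmem t ht1).2
        have h2 := hloc t ht2
        rw [hx0 p, ha] at h2
        linarith
  -- Inclusion 2 : every point of S is a strict egress point
  have hSub2 : S ⊆ flowStrictEgress (fun q t => (F q.1 t, q.2 + t))
      {q : (ℝ × ℝ) × ℝ | 0 < q.1.1 ∧ q.1.1 < Real.pi} := by
    rintro ⟨p, τ⟩ hq
    simp only [hS, Set.mem_setOf_eq] at hq
    rcases hq with ⟨ha, hb⟩ | ⟨ha, hb⟩
    · -- p.1 = 0, p.2 < 0
      obtain ⟨ε₁, hε₁, hpre, hpost⟩ := slope_neg_lemma (fun s => (F p s).1) p.2 (hd1 p) hb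
      obtain ⟨ε₂, hε₂, hcont⟩ := cont_lt_lemma (fun s => (F p s).1) (hxc p) Real.pi
        (by show (F p 0).1 < Real.pi; rw [hx0 p, ha]; exact Real.pi_pos)
      refine ⟨⟨?_, min ε₁ ε₂, lt_min hε₁ hε₂, ?_⟩, min ε₁ ε₂, lt_min hε₁ hε₂, ?_⟩
      · rw [hfr]; exact Or.inl ha
      · intro t ht
        have ht1 : t ∈ Set.Ioo (-ε₁) (0:ℝ) :=
          ⟨by have := min_le_left ε₁ ε₂; have := ht.1; linarith, ht.2⟩
        have h1 := hpre t ht1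
        rw [hx0 p, ha] at h1
        have h2 := hcont t (by
          rw [abs_lt]
          have := min_le_right ε₁ ε₂
          constructor <;> [linarith [ht.1]; linarith [ht.2]])
        exact ⟨h1, h2⟩
      · intro t ht hmem
        have ht1 : t ∈ Set.Ioo (0:ℝ) ε₁ :=
          ⟨ht.1, by have := min_le_left ε₁ ε₂; have := ht.2; linarith⟩
        have h1 := hpost t ht1
        rw [hx0 p, ha] at h1
        rcases hmem with hmem | hmem
        · exact absurd hmem.1 (by simpa using not_lt.mpr h1.le)
        · rw [hfr] at hmem
          rcases hmem with h | h <;> simp only [Set.mem_setOf_eq] at h <;>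
            [linarith [h ▸ h1]; (exact absurd h (by intro hh; rw [hh] at h1; linarith [Real.pi_pos]))]
    · -- p.1 = π, 0 < p.2
      obtain ⟨ε₁, hε₁, hpre, hpost⟩ := slope_pos_lemma (fun s => (F p s).1) p.2 (hd1 p) hb
      obtain ⟨ε₂, hε₂, hcont⟩ := cont_gt_lemma (fun s => (F p s).1) (hxc p) 0
        (by show (0:ℝ) < (F p 0).1; rw [hx0 p, ha]; exact Real.pi_pos)
      refine ⟨⟨?_, min ε₁ ε₂, lt_min hε₁ hε₂, ?_⟩, min ε₁ ε₂, lt_min hε₁ hε₂, ?_⟩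
      · rw [hfr]; exact Or.inr ha
      · intro t ht
        have ht1 : t ∈ Set.Ioo (-ε₁) (0:ℝ) :=
          ⟨by have := min_le_left ε₁ ε₂; have := ht.1; linarith, ht.2⟩
        have h1 := hpre t ht1
        rw [hx0 p, ha] at h1
        have h2 := hcont t (by
          rw [abs_lt]
          have := min_le_right ε₁ ε₂
          constructor <;> [linarith [ht.1]; linarith [ht.2]])
        exact ⟨h2, h1⟩
      · intro t ht hmem
        have ht1 : t ∈ Set.Ioo (0:ℝ) ε₁ :=
          ⟨ht.1, by have := min_le_left ε₁ ε₂; have := ht.2; linarith⟩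
        have h1 := hpost t ht1
        rw [hx0 p, ha] at h1
        rcases hmem with hmem | hmem
        · exact absurd hmem.2 (by simpa using not_lt.mpr h1.le)
        · rw [hfr] at hmem
          rcases hmem with h | h <;> simp only [Set.mem_setOf_eq] at h
          · rw [h] at h1; linarith [Real.pi_pos]
          · rw [h] at h1; linarith
  have hSub3 : flowStrictEgress (fun q t => (F q.1 t, q.2 + t))
      {q : (ℝ × ℝ) × ℝ | 0 < q.1.1 ∧ q.1.1 < Real.pi} ⊆
      flowEgress (fun q t => (F q.1 t, q.2 + t))
      {q : (ℝ × ℝ) × ℝ | 0 < q.1.1 ∧ q.1.1 < Real.pi} := fun q hq => hq.1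
  have hE : flowEgress (fun q t => (F q.1 t, q.2 + t))
      {q : (ℝ × ℝ) × ℝ | 0 < q.1.1 ∧ q.1.1 < Real.pi} = S :=
    Set.Subset.antisymm hSub1 (hSub2.trans hSub3)
  have hES : flowEgress (fun q t => (F q.1 t, q.2 + t))
      {q : (ℝ × ℝ) × ℝ | 0 < q.1.1 ∧ q.1.1 < Real.pi}
      = flowStrictEgress (fun q t => (F q.1 t, q.2 + t))
      {q : (ℝ × ℝ) × ℝ | 0 < q.1.1 ∧ q.1.1 < Real.pi} :=
    Set.Subset.antisymm (hE ▸ hSub2) hSub3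
  refine ⟨hES, hE, fun t => ⟨?_, ?_⟩⟩
  · rw [hE]
    simp only [hS, Set.mem_setOf_eq]
    intro h
    rcases h with ⟨h1, h2⟩ | ⟨h1, h2⟩
    · exact absurd h2 (lt_irrefl 0)
    · exact Real.pi_ne_zero h1.symm
  · rw [hE]
    simp only [hS, Set.mem_setOf_eq]
    intro h
    rcases h with ⟨h1, h2⟩ | ⟨h1, h2⟩
    · exact Real.pi_ne_zero h1
    · exact absurd h2 (lt_irrefl 0)
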